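/- arXiv:1605.08825 — 2 statements merged into one kernel-verified Lean document; each statement's English description precedes it below -/
import Mathlib

section
/- Under the stated assumptions, for every n with m \le n \le N one has, almost surely, E[J^{(m,N)} \mid \mathcal{F}_n] \ge J^{(m,n)} - ( \sum_{j \in A_n, \, n \le j \le N-1} j^{-(c\rho + \alpha)} E[|b_j| \mid \mathcal{F}_n] + \sum_{j \in B_n, \, n \le j \le N-1} j^{-\alpha} E[|b_j| \mid \mathcal{F}_n] ), where A_n = \{ j \ge n : j - c \log j \ge n \} and B_n = \{ j \ge n : j - c \log j < n \}. -/
open MeasureTheory Filter Finset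
open scoped Classical

private noncomputable def fterm {Ω : Type*} (b w : ℕ → Ω → ℝ) (α : ℝ) (j : ℕ) (y : Ω) : ℝ :=
  b j y * w j y / (j : ℝ) ^ α

private lemma condexp_neg_div_const {Ω : Type*} {m0 : MeasurableSpace Ω} {μ : Measure Ω}
    [IsProbabilityMeasure μ] (m : MeasurableSpace Ω) (hm : m ≤ m0) (h : Ω → ℝ) (r : ℝ) :
    μ[fun y => -(h y / r) | m] =ᵐ[μ] fun x => -((μ[h | m]) x / r) := by
  have h1 := condExp_smul (μ := μ) (m := m) (-r⁻¹) h
  have e1 : (-r⁻¹) • h = fun y => -(h y / r) := by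
    funext y; simp only [Pi.smul_apply, smul_eq_mul]; ring
  rw [e1] at h1
  refine h1.trans (Filter.Eventually.of_forall fun x => ?_)
  simp only [Pi.smul_apply, smul_eq_mul]; ring

/-- Lower bound on the conditional expectation `E[J^{(m,N)} | ℱ_n]`:
`E[J^{(m,N)} | ℱ_n] ≥ J^{(m,n)} - (∑_{j ∈ Aₙ} j^{-(cρ+α)} E[|b_j| | ℱ_n]
  + ∑_{j ∈ Bₙ} j^{-α} E[|b_j| | ℱ_n])` a.s., where
`Aₙ = {j ≥ n : j - c log j ≥ n}` and `Bₙ = {j ≥ n : j - c log j < n}`. -/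
theorem stmt_4 {Ω : Type*} {m0 : MeasurableSpace Ω} (μ : Measure Ω) [IsProbabilityMeasure μ]
    (ℱ : Filtration ℕ m0) (w : ℕ → Ω → ℝ)
    (hadapted : Adapted ℱ w)
    (hwbdd : ∀ j, ∀ᵐ x ∂μ, |w j x| ≤ 1)
    (ρ : ℝ) (hρ : 0 < ρ)
    (hcorr : ∀ k j : ℕ, k < j →
      ∀ᵐ x ∂μ, |(μ[w j | ℱ k]) x| ≤ Real.exp (-ρ * ((j : ℝ) - (k : ℝ))))
    (α c : ℝ) (hα : 1 / 2 < α) (hc : 0 < c)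
    (m N : ℕ) (hm : 2 ≤ m) (hmN : m ≤ N)
    (hfloor : ∀ j : ℕ, m ≤ j → (1 : ℝ) ≤ (j : ℝ) - c * Real.log j)
    (b : ℕ → Ω → ℝ)
    (hbint : ∀ j, Integrable (b j) μ)
    (hb : ∀ j : ℕ, StronglyMeasurable[ℱ ⌊(j : ℝ) - c * Real.log j⌋₊] (b j)) :
    ∀ n : ℕ, m ≤ n → n ≤ N →
      ∀ᵐ x ∂μ,
        (μ[fun y => ∑ j ∈ Finset.Ico m N, b j y * w j y / (j : ℝ) ^ α | ℱ n]) x ≥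
          (∑ j ∈ Finset.Ico m n, b j x * w j x / (j : ℝ) ^ α) -
            ((∑ j ∈ (Finset.Ico n N).filter (fun j : ℕ => (n : ℝ) ≤ (j : ℝ) - c * Real.log j),
                (μ[fun y => |b j y| | ℱ n]) x / (j : ℝ) ^ (c * ρ + α)) +
              ∑ j ∈ (Finset.Ico n N).filter (fun j : ℕ => (j : ℝ) - c * Real.log j < (n : ℝ)),
                (μ[fun y => |b j y| | ℱ n]) x / (j : ℝ) ^ α) := by
  intro n hn hnN
  have hw_meas : ∀ j, AEStronglyMeasurable (w j) μ :=
    fun j => ((hadapted j).stronglyMeasurable.mono (ℱ.le j)).aestronglyMeasurable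
  have hw_int : ∀ j, Integrable (w j) μ := fun j =>
    (integrable_const (1 : ℝ)).mono' (hw_meas j)
      (by simpa [Real.norm_eq_abs] using hwbdd j)
  have hbw_int : ∀ j, Integrable (fun y => b j y * w j y) μ := by
    intro j
    have := (hbint j).bdd_mul (hw_meas j) (by simpa [Real.norm_eq_abs] using hwbdd j)
    simpa [mul_comm] using this
  have hf_int : ∀ j, Integrable (fterm b w α j) μ := fun j => (hbw_int j).div_const _
  -- key a.e. lower bound for j ≥ n
  have key : ∀ j : ℕ, n ≤ j →
      ∀ᵐ x ∂μ, -((μ[fun y => |b j y| | ℱ n]) x /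
          (j : ℝ) ^ (if (n : ℝ) ≤ (j : ℝ) - c * Real.log j then c * ρ + α else α))
        ≤ (μ[fterm b w α j | ℱ n]) x := by
    intro j hj
    have hjm : m ≤ j := le_trans hn hj
    have hj2 : (2 : ℝ) ≤ (j : ℝ) := by exact_mod_cast le_trans hm hjm
    have hj1 : (1 : ℝ) < (j : ℝ) := by linarith
    have hj0 : (0 : ℝ) < (j : ℝ) := by linarith
    by_cases hA : (n : ℝ) ≤ (j : ℝ) - c * Real.log j
    · simp only [if_pos hA]
      set r : ℝ := (j : ℝ) ^ (c * ρ + α) with hr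
      set k : ℕ := ⌊(j : ℝ) - c * Real.log j⌋₊ with hk
      have hx0 : (0 : ℝ) ≤ (j : ℝ) - c * Real.log j := le_trans zero_le_one (hfloor j hjm)
      have hnk : n ≤ k := Nat.le_floor hA
      have hkj : k < j := by
        rw [hk, Nat.floor_lt hx0]
        have : 0 < c * Real.log j := mul_pos hc (Real.log_pos hj1)
        linarith
      have hkle : (k : ℝ) ≤ (j : ℝ) - c * Real.log j := Nat.floor_le hx0
      have hsm : StronglyMeasurable[ℱ k] (fun y => b j y / (j : ℝ) ^ α) := by
        simpa [div_eq_mul_inv] using (hb j).mul_const ((j : ℝ) ^ α)⁻¹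
      have he : fterm b w α j = (fun y => b j y / (j : ℝ) ^ α) * w j := by
        funext y
        simp only [fterm, Pi.mul_apply, div_mul_eq_mul_div]
      have hmul : μ[fterm b w α j | ℱ k] =ᵐ[μ]
          (fun y => b j y / (j : ℝ) ^ α) * μ[w j | ℱ k] := by
        rw [he]
        exact condExp_mul_of_stronglyMeasurable_left hsm (he ▸ hf_int j) (hw_int j)
      have hbd : ∀ᵐ y ∂μ, -(|b j y| / r) ≤ (μ[fterm b w α j | ℱ k]) y := by
        filter_upwards [hmul, hcorr k j hkj] with y hy hcy
        rw [hy]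
        have hpow : (0 : ℝ) < (j : ℝ) ^ α := Real.rpow_pos_of_pos hj0 α
        have h1 : |((fun y => b j y / (j : ℝ) ^ α) * μ[w j | ℱ k]) y| ≤ |b j y| / r := by
          simp only [Pi.mul_apply]
          rw [abs_mul, abs_div, abs_of_pos hpow]
          calc |b j y| / (j : ℝ) ^ α * |(μ[w j | ℱ k]) y|
              ≤ |b j y| / (j : ℝ) ^ α * Real.exp (-ρ * ((j : ℝ) - (k : ℝ))) := by
                gcongr
            _ ≤ |b j y| / (j : ℝ) ^ α * (j : ℝ) ^ (-(c * ρ)) := by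
                gcongr
                rw [Real.rpow_def_of_pos hj0]
                apply Real.exp_le_exp.2
                have h2 : c * Real.log j ≤ (j : ℝ) - (k : ℝ) := by linarith
                have h3 : Real.log (j : ℝ) * (-(c * ρ)) = -ρ * (c * Real.log j) := by ring
                rw [h3]
                have := mul_le_mul_of_nonneg_left h2 hρ.le
                nlinarith
            _ = |b j y| / r := by
                rw [hr, Real.rpow_add hj0, Real.rpow_neg hj0.le, ← div_eq_mul_inv,
                  div_div, mul_comm ((j : ℝ) ^ α)]
        exact neg_le_of_abs_le h1
      have htower : μ[fterm b w α j | ℱ n] =ᵐ[μ] μ[μ[fterm b w α j | ℱ k] | ℱ n] :=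
        (condExp_condExp_of_le (ℱ.mono hnk) (ℱ.le k)).symm
      have hmono : μ[fun y => -(|b j y| / r) | ℱ n] ≤ᵐ[μ] μ[μ[fterm b w α j | ℱ k] | ℱ n] :=
        condExp_mono (by exact ((hbint j).abs.div_const r).neg) integrable_condExp hbd
      filter_upwards [htower, hmono,
        condexp_neg_div_const (ℱ n) (ℱ.le n) (fun y => |b j y|) r] with x h1 h2 h3
      rw [h1, ← h3]
      exact h2
    · simp only [if_neg hA]
      have hpow : (0 : ℝ) < (j : ℝ) ^ α := Real.rpow_pos_of_pos hj0 α
      have hbd : ∀ᵐ y ∂μ, -(|b j y| / (j : ℝ) ^ α) ≤ fterm b w α j y := by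
        filter_upwards [hwbdd j] with y hy
        have h1 : |fterm b w α j y| ≤ |b j y| / (j : ℝ) ^ α := by
          rw [fterm, abs_div, abs_of_pos hpow, abs_mul]
          gcongr
          exact mul_le_of_le_one_right (abs_nonneg _) hy
        exact neg_le_of_abs_le h1
      have hmono : μ[fun y => -(|b j y| / (j : ℝ) ^ α) | ℱ n] ≤ᵐ[μ]
          μ[fterm b w α j | ℱ n] :=
        condExp_mono (by exact ((hbint j).abs.div_const _).neg) (hf_int j) hbd
      filter_upwards [hmono,
        condexp_neg_div_const (ℱ n) (ℱ.le n) (fun y => |b j y|) ((j : ℝ) ^ α)] with x h2 h3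
      rw [← h3]
      exact h2
  have hkeyall : ∀ᵐ x ∂μ, ∀ j : ℕ, n ≤ j →
      -((μ[fun y => |b j y| | ℱ n]) x /
          (j : ℝ) ^ (if (n : ℝ) ≤ (j : ℝ) - c * Real.log j then c * ρ + α else α))
        ≤ (μ[fterm b w α j | ℱ n]) x := by
    rw [ae_all_iff]
    intro j
    by_cases hj : n ≤ j
    · filter_upwards [key j hj] with x hx _; exact hx
    · filter_upwards with x hj'; exact absurd hj' hj
  -- terms with j < n are ℱ n-measurable
  have hlt : ∀ j : ℕ, m ≤ j → j < n → μ[fterm b w α j | ℱ n] = fterm b w α j := by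
    intro j hjm hjn
    have hj1 : (1 : ℝ) ≤ (j : ℝ) := by
      have : (2 : ℝ) ≤ (j : ℝ) := by exact_mod_cast le_trans hm hjm
      linarith
    have hklej : ⌊(j : ℝ) - c * Real.log j⌋₊ ≤ j := by
      apply Nat.floor_le_of_le
      have : 0 ≤ c * Real.log j := mul_nonneg hc.le (Real.log_nonneg hj1)
      linarith
    refine condExp_of_stronglyMeasurable (ℱ.le n) ?_ (hf_int j)
    have hbw : StronglyMeasurable[ℱ n] (fun y => b j y * w j y) :=
      ((hb j).mono (ℱ.mono (le_trans hklej hjn.le))).mul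
        ((hadapted j).stronglyMeasurable.mono (ℱ.mono hjn.le))
    show StronglyMeasurable[ℱ n] (fun y => fterm b w α j y)
    simpa [fterm, div_eq_mul_inv] using hbw.mul_const ((j : ℝ) ^ α)⁻¹
  have heq : (fun y => ∑ j ∈ Finset.Ico m N, b j y * w j y / (j : ℝ) ^ α)
      = ∑ j ∈ Finset.Ico m N, fterm b w α j := by
    funext y
    simp [fterm, Finset.sum_apply]
  have hsum := condExp_finsetSum (μ := μ) (m := ℱ n)
    (s := Finset.Ico m N) (f := fterm b w α) (fun j _ => hf_int j)
  rw [heq]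
  filter_upwards [hsum, hkeyall] with x hx hxk
  rw [ge_iff_le, hx, Finset.sum_apply]
  have hsplit : ∑ j ∈ Finset.Ico m N, (μ[fterm b w α j | ℱ n]) x
      = ∑ j ∈ Finset.Ico m n, (μ[fterm b w α j | ℱ n]) x
        + ∑ j ∈ Finset.Ico n N, (μ[fterm b w α j | ℱ n]) x :=
    (Finset.sum_Ico_consecutive _ hn hnN).symm
  have h1 : ∑ j ∈ Finset.Ico m n, (μ[fterm b w α j | ℱ n]) x
      = ∑ j ∈ Finset.Ico m n, b j x * w j x / (j : ℝ) ^ α := by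
    refine Finset.sum_congr rfl fun j hj => ?_
    rw [hlt j (Finset.mem_Ico.1 hj).1 (Finset.mem_Ico.1 hj).2]
    rfl
  have h2 : ∑ j ∈ Finset.Ico n N,
        -((μ[fun y => |b j y| | ℱ n]) x /
          (j : ℝ) ^ (if (n : ℝ) ≤ (j : ℝ) - c * Real.log j then c * ρ + α else α))
      ≤ ∑ j ∈ Finset.Ico n N, (μ[fterm b w α j | ℱ n]) x :=
    Finset.sum_le_sum fun j hj => hxk j (Finset.mem_Ico.1 hj).1
  have h3 : ∑ j ∈ Finset.Ico n N,
        ((μ[fun y => |b j y| | ℱ n]) x /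
          (j : ℝ) ^ (if (n : ℝ) ≤ (j : ℝ) - c * Real.log j then c * ρ + α else α))
      = (∑ j ∈ (Finset.Ico n N).filter (fun j : ℕ => (n : ℝ) ≤ (j : ℝ) - c * Real.log j),
          (μ[fun y => |b j y| | ℱ n]) x / (j : ℝ) ^ (c * ρ + α))
        + ∑ j ∈ (Finset.Ico n N).filter (fun j : ℕ => (j : ℝ) - c * Real.log j < (n : ℝ)),
          (μ[fun y => |b j y| | ℱ n]) x / (j : ℝ) ^ α := by
    rw [← Finset.sum_filter_add_sum_filter_not (Finset.Ico n N)
      (fun j : ℕ => (n : ℝ) ≤ (j : ℝ) - c * Real.log j)]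
    congr 1
    · refine Finset.sum_congr rfl fun j hj => ?_
      rw [if_pos (Finset.mem_filter.1 hj).2]
    · have hfe : (Finset.Ico n N).filter
          (fun j : ℕ => ¬ ((n : ℝ) ≤ (j : ℝ) - c * Real.log j))
          = (Finset.Ico n N).filter (fun j : ℕ => (j : ℝ) - c * Real.log j < (n : ℝ)) := by
        apply Finset.filter_congr
        intro j _
        simp [not_le]
      rw [hfe]
      refine Finset.sum_congr rfl fun j hj => ?_
      rw [if_neg (not_le.2 (Finset.mem_filter.1 hj).2)]
  rw [hsplit, h1]
  rw [Finset.sum_neg_distrib, h3] at h2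
  linarith
end

section
/- Under the stated assumptions, for every \lambda > 0 one has \lambda \, P( \max_{m \le n \le N} J^{(m,n)} > \lambda ) \le E[ ( |J^{(m,N)}| + D ) \mathbf{1}_A ], where A = \{ \max_{m \le n \le N} J^{(m,n)} > \lambda \} and D = ( \sum_{j=m}^{N-1} j^{-(c\rho + \alpha - \eta)} + d\, m^{\beta} / m^{\alpha - \eta} ) \cdot \sup_{m \le j \le N} c_j. -/
open MeasureTheory Filter Finset

lemma auxT_finite (c : ℝ) (hc : 0 < c) (n : ℕ) :
    {j : ℕ | n ≤ j ∧ (j : ℝ) - c * Real.log (j : ℝ) ≤ (n : ℝ)}.Finite := by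
  apply Set.Finite.subset (Finset.range (⌈(2*c + n + 1)^2⌉₊ + 1) : Finset ℕ).finite_toSet
  intro j hj
  simp only [Finset.coe_range, Set.mem_Iio]
  by_contra h
  push_neg at h
  have hjM : ((2*c + n + 1)^2 : ℝ) ≤ (j : ℝ) :=
    le_trans (Nat.le_ceil _) (by exact_mod_cast Nat.le_of_succ_le h)
  have hb : (0:ℝ) ≤ 2*c + n + 1 := by positivity
  have hj0 : (0:ℝ) < j := lt_of_lt_of_le (by positivity) hjM
  set s := Real.sqrt (j : ℝ) with hs
  have hs1 : 2*c + n + 1 ≤ s := by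
    have := Real.sqrt_le_sqrt hjM
    rwa [Real.sqrt_sq hb] at this
  have hs0 : 0 < s := lt_of_lt_of_le (by positivity) hs1
  have hsq : s^2 = (j:ℝ) := Real.sq_sqrt hj0.le
  have hlog : Real.log (j:ℝ) ≤ 2 * s := by
    have h1 : Real.log s ≤ s - 1 := Real.log_le_sub_one_of_pos hs0
    have h2 : Real.log (j:ℝ) = 2 * Real.log s := by
      rw [hs, Real.log_sqrt hj0.le]; ring
    linarith
  have hle := hj.2
  nlinarith [mul_le_mul hs1 (show (n:ℝ) + 1 ≤ s - 2*c by linarith) (by positivity) (by linarith)]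

lemma abs_integral_le_integral_abs' {Ω : Type*} [MeasurableSpace Ω] (μ : Measure Ω)
    (f : Ω → ℝ) : |∫ x, f x ∂μ| ≤ ∫ x, |f x| ∂μ := by
  simpa [Real.norm_eq_abs] using norm_integral_le_integral_norm (μ := μ) f

set_option maxHeartbeats 3200000 in
/-- Weak-type maximal inequality:
`λ P( max_{m ≤ n ≤ N} J^{(m,n)} > λ ) ≤ E[(|J^{(m,N)}| + D) 1_A]`, where
`A = { max_{m ≤ n ≤ N} J^{(m,n)} > λ }` and
`D = (∑_{j=m}^{N-1} j^{-(cρ+α-η)} + d m^β / m^{α-η}) sup_{m ≤ j ≤ N} c_j`. -/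
theorem stmt_18 {Ω : Type*} {m0 : MeasurableSpace Ω} (μ : Measure Ω) [IsProbabilityMeasure μ]
    (ℱ : Filtration ℕ m0) (w : ℕ → Ω → ℝ)
    (hadapted : Adapted ℱ w)
    (hwbdd : ∀ j, ∀ᵐ x ∂μ, |w j x| ≤ 1)
    (ρ : ℝ) (hρ : 0 < ρ)
    (hcorr : ∀ k j : ℕ, k < j →
      ∀ᵐ x ∂μ, |(μ[w j | ℱ k]) x| ≤ Real.exp (-ρ * ((j : ℝ) - (k : ℝ))))
    (α c η : ℝ) (hα : 1 / 2 < α) (hc : 0 < c) (hη : 0 ≤ η)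
    (m N : ℕ) (hm : 2 ≤ m) (hmN : m ≤ N)
    (hfloor : ∀ j : ℕ, m ≤ j → (1 : ℝ) ≤ (j : ℝ) - c * Real.log j)
    (b cc : ℕ → Ω → ℝ)
    (hb : ∀ j : ℕ, StronglyMeasurable[ℱ ⌊(j : ℝ) - c * Real.log j⌋₊] (b j))
    (hccpos : ∀ j x, 0 ≤ cc j x)
    (hccint : ∀ j, Integrable (cc j) μ)
    (hbcc : ∀ j, ∀ᵐ x ∂μ, |b j x| ≤ cc j x * (j : ℝ) ^ η)
    (β d : ℝ) (hβ0 : 0 < β) (hβ : β < α - η) (hd : 0 < d)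
    (hcard : ∀ n : ℕ, 1 ≤ n →
      (({j : ℕ | n ≤ j ∧ (j : ℝ) - c * Real.log j ≤ (n : ℝ)}.ncard : ℝ)) ≤ d * (n : ℝ) ^ β)
    (lam : ℝ) (hlam : 0 < lam) :
    lam * (μ {x | lam < Finset.sup' (Finset.Icc m N) (Finset.nonempty_Icc.mpr hmN)
        fun n => ∑ j ∈ Finset.Ico m n, b j x * w j x / (j : ℝ) ^ α}).toReal ≤
      ∫ x in {x | lam < Finset.sup' (Finset.Icc m N) (Finset.nonempty_Icc.mpr hmN)
          fun n => ∑ j ∈ Finset.Ico m n, b j x * w j x / (j : ℝ) ^ α},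
        (|∑ j ∈ Finset.Ico m N, b j x * w j x / (j : ℝ) ^ α| +
          ((∑ j ∈ Finset.Ico m N, 1 / (j : ℝ) ^ (c * ρ + α - η)) +
              d * (m : ℝ) ^ β / (m : ℝ) ^ (α - η)) *
            (Finset.sup' (Finset.Icc m N) (Finset.nonempty_Icc.mpr hmN) fun j => cc j x)) ∂μ := by
  classical
  have hne : (Finset.Icc m N).Nonempty := Finset.nonempty_Icc.mpr hmN
  set G : ℕ → Ω → ℝ := fun j x => b j x * w j x / (j : ℝ) ^ α with hGdef
  set S : ℕ → Ω → ℝ := fun n x => ∑ j ∈ Finset.Ico m n, G j x with hSdef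
  set C : Ω → ℝ := fun x => (Finset.Icc m N).sup' hne (fun j => cc j x) with hCdef
  set D1 : ℝ := ∑ j ∈ Finset.Ico m N, 1 / (j : ℝ) ^ (c * ρ + α - η) with hD1def
  set D2 : ℝ := d * (m : ℝ) ^ β / (m : ℝ) ^ (α - η) with hD2def
  set A : Set Ω := {x | lam < (Finset.Icc m N).sup' hne fun n => S n x} with hAdef
  set k : ℕ → ℕ := fun j => ⌊(j : ℝ) - c * Real.log j⌋₊ with hkdef
  -- basic facts
  have hjpos : ∀ j : ℕ, m ≤ j → (0:ℝ) < (j:ℝ) := by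
    intro j hj; have : (2:ℝ) ≤ (j:ℝ) := by exact_mod_cast le_trans hm hj
    linarith
  have hkub : ∀ j : ℕ, m ≤ j → (k j : ℝ) ≤ (j : ℝ) - c * Real.log j := by
    intro j hj
    exact Nat.floor_le (le_trans zero_le_one (hfloor j hj))
  have hkj : ∀ j : ℕ, m ≤ j → k j < j := by
    intro j hj
    have h2 : (0:ℝ) < Real.log j := by
      have : (2:ℝ) ≤ (j:ℝ) := by exact_mod_cast le_trans hm hj
      exact Real.log_pos (by linarith)
    have := hkub j hj
    have hlt : (k j : ℝ) < (j : ℝ) := by nlinarith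
    exact_mod_cast hlt
  -- measurability
  have hwm : ∀ j, StronglyMeasurable (w j) := fun j => ((hadapted j).mono (ℱ.le j) le_rfl).stronglyMeasurable
  have hbm : ∀ j, StronglyMeasurable (b j) := fun j => (hb j).mono (ℱ.le _)
  have hGm : ∀ j, StronglyMeasurable (G j) := by
    intro j
    simpa [hGdef, div_eq_mul_inv] using ((hbm j).mul (hwm j)).mul_const ((j:ℝ)^α)⁻¹
  have hSm : ∀ n k' : ℕ, n ≤ k' + 1 → StronglyMeasurable[ℱ k'] (S n) := by
    intro n k' hnk
    apply Finset.stronglyMeasurable_fun_sum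
    intro j hj
    rw [Finset.mem_Ico] at hj
    have hjk' : j ≤ k' := by omega
    have hkjk' : k j ≤ k' := le_trans (hkj j hj.1).le hjk'
    simpa [hGdef, div_eq_mul_inv] using
      (((hb j).mono (ℱ.mono hkjk')).mul (((hadapted j).mono (ℱ.mono hjk') le_rfl).stronglyMeasurable)).mul_const ((j:ℝ)^α)⁻¹
  -- the sets E
  set E : ℕ → Set Ω := fun k' => ⋃ n ∈ Finset.Icc m (min k' N), {x | lam < S n x} with hEdef
  have hEmem : ∀ (k' : ℕ) (x : Ω),
      x ∈ E k' ↔ ∃ n, m ≤ n ∧ n ≤ k' ∧ n ≤ N ∧ lam < S n x := by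
    intro k' x
    simp only [hEdef, Set.mem_iUnion, Finset.mem_Icc, Set.mem_setOf_eq, le_min_iff,
      exists_prop]
    constructor
    · rintro ⟨n, ⟨hn1, hn2, hn3⟩, hn4⟩; exact ⟨n, hn1, hn2, hn3, hn4⟩
    · rintro ⟨n, hn1, hn2, hn3, hn4⟩; exact ⟨n, ⟨hn1, hn2, hn3⟩, hn4⟩
  have hEmeasF : ∀ k', MeasurableSet[ℱ k'] (E k') := by
    intro k'
    apply Finset.measurableSet_biUnion
    intro n hn
    rw [Finset.mem_Icc, le_min_iff] at hn
    exact measurableSet_lt measurable_const (hSm n k' (by omega)).measurable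
  have hEmeas : ∀ k', MeasurableSet (E k') := fun k' => ℱ.le k' _ (hEmeasF k')
  have hEmono : ∀ k1 k2 : ℕ, k1 ≤ k2 → E k1 ⊆ E k2 := by
    intro k1 k2 h x hx
    rw [hEmem] at hx ⊢
    obtain ⟨n, h1, h2, h3, h4⟩ := hx
    exact ⟨n, h1, le_trans h2 h, h3, h4⟩
  have hAmem : ∀ x : Ω, x ∈ A ↔ ∃ n, m ≤ n ∧ n ≤ N ∧ lam < S n x := by
    intro x
    rw [hAdef]
    simp only [Set.mem_setOf_eq, Finset.lt_sup'_iff, Finset.mem_Icc]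
    constructor
    · rintro ⟨n, ⟨h1, h2⟩, h3⟩; exact ⟨n, h1, h2, h3⟩
    · rintro ⟨n, h1, h2, h3⟩; exact ⟨n, ⟨h1, h2⟩, h3⟩
  have hAeq : A = E N := by
    ext x; rw [hAmem, hEmem]
    constructor
    · rintro ⟨n, h1, h2, h3⟩; exact ⟨n, h1, h2, h2, h3⟩
    · rintro ⟨n, h1, h2, h3, h4⟩; exact ⟨n, h1, h3, h4⟩
  have hEA : ∀ k', E k' ⊆ A := by
    intro k' x hx
    rw [hEmem] at hx; rw [hAmem]
    obtain ⟨n, h1, h2, h3, h4⟩ := hx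
    exact ⟨n, h1, h3, h4⟩
  have hAmeas : MeasurableSet A := hAeq ▸ hEmeas N
  -- the stopping time
  set τ : Ω → ℕ := fun x =>
    if h : ∃ n, m ≤ n ∧ n ≤ N ∧ lam < S n x then Nat.find h else 0 with hτdef
  have hτspec : ∀ x ∈ A, m ≤ τ x ∧ τ x ≤ N ∧ lam < S (τ x) x := by
    intro x hx
    rw [hAmem] at hx
    rw [hτdef]; simp only [hx, dif_pos]
    exact Nat.find_spec hx
  have hτmin : ∀ x ∈ A, ∀ n, m ≤ n ∧ n ≤ N ∧ lam < S n x → τ x ≤ n := by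
    intro x hx n hn
    rw [hAmem] at hx
    rw [hτdef]; simp only [hx, dif_pos]
    exact Nat.find_min' hx hn
  have hEiff : ∀ x ∈ A, ∀ k', (x ∈ E k' ↔ τ x ≤ k') := by
    intro x hx k'
    rw [hEmem]
    constructor
    · rintro ⟨n, h1, h2, h3, h4⟩; exact le_trans (hτmin x hx n ⟨h1, h3, h4⟩) h2
    · intro h
      obtain ⟨h1, h2, h3⟩ := hτspec x hx
      exact ⟨τ x, h1, h, h2, h3⟩
  -- key pointwise identity
  have hkey : ∀ x ∈ A, lam ≤ S N x - ∑ j ∈ Finset.Ico m N, Set.indicator (E j) (G j) x := by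
    intro x hx
    obtain ⟨h1, h2, h3⟩ := hτspec x hx
    have hsplitS : S N x = S (τ x) x + ∑ j ∈ Finset.Ico (τ x) N, G j x := by
      rw [hSdef]
      exact (Finset.sum_Ico_consecutive _ h1 h2).symm
    have hz : ∑ j ∈ Finset.Ico m (τ x), Set.indicator (E j) (G j) x = 0 := by
      apply Finset.sum_eq_zero
      intro j hj
      rw [Finset.mem_Ico] at hj
      have hnotin : x ∉ E j := by rw [hEiff x hx]; omega
      simp [Set.indicator_of_notMem hnotin]
    have ho : ∀ j ∈ Finset.Ico (τ x) N, Set.indicator (E j) (G j) x = G j x := by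
      intro j hj
      rw [Finset.mem_Ico] at hj
      have hin : x ∈ E j := by rw [hEiff x hx]; exact hj.1
      simp [Set.indicator_of_mem hin]
    have hind : ∑ j ∈ Finset.Ico m N, Set.indicator (E j) (G j) x
        = ∑ j ∈ Finset.Ico (τ x) N, G j x := by
      calc ∑ j ∈ Finset.Ico m N, Set.indicator (E j) (G j) x
          = ∑ j ∈ Finset.Ico m (τ x), Set.indicator (E j) (G j) x
            + ∑ j ∈ Finset.Ico (τ x) N, Set.indicator (E j) (G j) x :=
            (Finset.sum_Ico_consecutive _ h1 h2).symm
        _ = 0 + ∑ j ∈ Finset.Ico (τ x) N, G j x := by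
            rw [hz, Finset.sum_congr rfl ho]
        _ = ∑ j ∈ Finset.Ico (τ x) N, G j x := by ring
    rw [hind]
    linarith
  clear_value τ E
  -- integrability
  have hwint : ∀ j, Integrable (w j) μ := by
    intro j
    refine Integrable.mono' (integrable_const (1:ℝ)) (hwm j).aestronglyMeasurable ?_
    filter_upwards [hwbdd j] with x hx using by simpa [Real.norm_eq_abs] using hx
  have hGbound : ∀ j, m ≤ j → ∀ᵐ x ∂μ, ‖G j x‖ ≤ cc j x * ((j:ℝ)^η / (j:ℝ)^α) := by
    intro j hj
    have hjα : (0:ℝ) < (j:ℝ)^α := Real.rpow_pos_of_pos (hjpos j hj) α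
    filter_upwards [hbcc j, hwbdd j] with x h1 h2
    have hb0 : (0:ℝ) ≤ |b j x| := abs_nonneg _
    have hw0 : (0:ℝ) ≤ |w j x| := abs_nonneg _
    calc ‖G j x‖ = |b j x * w j x| / (j:ℝ)^α := by
          rw [hGdef]; rw [Real.norm_eq_abs, abs_div, abs_of_pos hjα]
      _ ≤ (cc j x * (j:ℝ)^η) / (j:ℝ)^α := by
          gcongr
          rw [abs_mul]; nlinarith
      _ = cc j x * ((j:ℝ)^η / (j:ℝ)^α) := by ring
  have hGint : ∀ j, m ≤ j → Integrable (G j) μ := by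
    intro j hj
    exact Integrable.mono' ((hccint j).mul_const _) (hGm j).aestronglyMeasurable (hGbound j hj)
  -- sup of the cc's
  have hsupAE : ∀ (s : Finset ℕ) (hs : s.Nonempty),
      AEMeasurable (fun x => s.sup' hs (fun j => cc j x)) μ := by
    intro s hs
    induction hs using Finset.Nonempty.cons_induction with
    | singleton a =>
        simp only [Finset.sup'_singleton]
        exact (hccint a).aemeasurable
    | cons a s ha hs ih =>
        simp only [Finset.sup'_cons hs]
        exact AEMeasurable.sup' (hccint a).aemeasurable ih
  have hCae : AEStronglyMeasurable C μ := (hsupAE _ hne).aestronglyMeasurable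
  have hCnn : ∀ x, 0 ≤ C x := fun x =>
    le_trans (hccpos m x) (Finset.le_sup' (fun j => cc j x) (Finset.mem_Icc.mpr ⟨le_refl m, hmN⟩))
  have hcleC : ∀ j ∈ Finset.Icc m N, ∀ x, cc j x ≤ C x := fun j hj x => Finset.le_sup' (fun i => cc i x) hj
  have hCint : Integrable C μ := by
    refine Integrable.mono' (integrable_finset_sum (Finset.Icc m N) fun j _ => hccint j)
      hCae ?_
    refine Filter.Eventually.of_forall fun x => ?_
    rw [Real.norm_eq_abs, abs_of_nonneg (hCnn x)]
    exact Finset.sup'_le hne _ fun j hj =>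
      Finset.single_le_sum (fun i _ => hccpos i x) hj
  set I0 : ℝ := ∫ x in A, C x ∂μ with hI0def
  have hI0 : 0 ≤ I0 := setIntegral_nonneg hAmeas fun x _ => hCnn x
  have hccI0 : ∀ j ∈ Finset.Icc m N, ∀ s : Set Ω, MeasurableSet s → s ⊆ A →
      ∫ x in s, cc j x ∂μ ≤ I0 := by
    intro j hj s hs hsub
    calc ∫ x in s, cc j x ∂μ ≤ ∫ x in s, C x ∂μ :=
          setIntegral_mono_on ((hccint j).integrableOn) (hCint.integrableOn) hs
            fun x _ => hcleC j hj x
      _ ≤ I0 := setIntegral_mono_set hCint.integrableOn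
            (Filter.Eventually.of_forall hCnn |>.filter_mono (ae_mono Measure.restrict_le_self)) 
            (HasSubset.Subset.eventuallyLE hsub)
  -- integrability of b
  have hbint : ∀ j, Integrable (b j) μ := by
    intro j
    refine Integrable.mono' ((hccint j).mul_const ((j:ℝ)^η)) (hbm j).aestronglyMeasurable ?_
    filter_upwards [hbcc j] with x hx using by simpa [Real.norm_eq_abs] using hx
  -- first (conditional-expectation) bound
  have hI1 : ∀ j ∈ Finset.Ico m N,
      |∫ x in E (k j), G j x ∂μ| ≤ 1 / (j:ℝ) ^ (c*ρ + α - η) * I0 := by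
    intro j hjmem
    rw [Finset.mem_Ico] at hjmem
    obtain ⟨hjm, hjN⟩ := hjmem
    have hj0 : (0:ℝ) < (j:ℝ) := hjpos j hjm
    have hjα : (0:ℝ) < (j:ℝ)^α := Real.rpow_pos_of_pos hj0 α
    set K : ℕ := k j with hKdef
    have hK : K < j := hkj j hjm
    have hKub : (K : ℝ) ≤ (j : ℝ) - c * Real.log j := hkub j hjm
    set F : Ω → ℝ := Set.indicator (E K) (b j) with hFdef
    set CE : Ω → ℝ := μ[w j | ℱ K] with hCEdef
    have hFm : StronglyMeasurable[ℱ K] F := (hb j).indicator (hEmeasF K)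
    have hCEbdd : ∀ᵐ x ∂μ, |CE x| ≤ Real.exp (-ρ * ((j:ℝ) - (K:ℝ))) := hcorr K j hK
    have hCEsm : StronglyMeasurable CE := stronglyMeasurable_condExp.mono (ℱ.le K)
    have hCEcondexp : ∫ x, (F * w j) x ∂μ = ∫ x, (μ[F * w j | ℱ K]) x ∂μ :=
      (integral_condExp (ℱ.le K)).symm
    have hEKmeas : MeasurableSet (E K) := hEmeas K
    have hEKsubA : E K ⊆ A := hEA K
    have hccint' : ∫ x in E K, cc j x ∂μ ≤ I0 :=
      hccI0 j (Finset.mem_Icc.mpr ⟨hjm, hjN.le⟩) (E K) hEKmeas hEKsubA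
    clear_value K
    have hFbdd : ∀ᵐ x ∂μ, |F x| ≤ cc j x * (j:ℝ)^η := by
      filter_upwards [hbcc j] with x hx
      rw [hFdef]
      by_cases hxE : x ∈ E K
      · rw [Set.indicator_of_mem hxE]; exact hx
      · rw [Set.indicator_of_notMem hxE]
        simpa using le_trans (abs_nonneg (b j x)) hx
    have hFint : Integrable F μ := Integrable.mono' ((hccint j).mul_const _)
      ((hFm.mono (ℱ.le K)).aestronglyMeasurable)
      (by filter_upwards [hFbdd] with x hx using by simpa [Real.norm_eq_abs] using hx)
    have hFwint : Integrable (F * w j) μ := by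
      refine Integrable.mono' ((hccint j).mul_const ((j:ℝ)^η))
        (((hFm.mono (ℱ.le K)).aestronglyMeasurable).mul (hwm j).aestronglyMeasurable) ?_
      filter_upwards [hFbdd, hwbdd j] with x h1 h2
      rw [Pi.mul_apply, Real.norm_eq_abs, abs_mul]
      nlinarith [abs_nonneg (F x), abs_nonneg (w j x)]
    have hexpnn : (0:ℝ) ≤ Real.exp (-ρ * ((j:ℝ) - (K:ℝ))) := Real.exp_nonneg _
    have hFCEint : Integrable (fun x => F x * CE x) μ := by
      refine Integrable.mono' (((hccint j).mul_const ((j:ℝ)^η)).mul_const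
        (Real.exp (-ρ * ((j:ℝ) - (K:ℝ)))))
        (((hFm.mono (ℱ.le K)).aestronglyMeasurable).mul hCEsm.aestronglyMeasurable) ?_
      filter_upwards [hFbdd, hCEbdd] with x h1 h2
      rw [Real.norm_eq_abs, abs_mul]
      have h3 : (0:ℝ) ≤ |F x| := abs_nonneg _
      have h4 : (0:ℝ) ≤ |CE x| := abs_nonneg _
      calc |F x| * |CE x| ≤ (cc j x * (j:ℝ)^η) * Real.exp (-ρ * ((j:ℝ) - (K:ℝ))) := by
            apply mul_le_mul h1 h2 h4 (le_trans h3 h1)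
        _ = cc j x * (j:ℝ)^η * Real.exp (-ρ * ((j:ℝ) - (K:ℝ))) := by ring
    have hCEstep : ∫ x, F x * w j x ∂μ = ∫ x, F x * CE x ∂μ := by
      have h2 : μ[F * w j | ℱ K] =ᵐ[μ] F * μ[w j | ℱ K] :=
        condExp_mul_of_stronglyMeasurable_left hFm hFwint (hwint j)
      calc ∫ x, F x * w j x ∂μ = ∫ x, (μ[F * w j | ℱ K]) x ∂μ := hCEcondexp
        _ = ∫ x, (F * μ[w j | ℱ K]) x ∂μ := integral_congr_ae h2
        _ = ∫ x, F x * CE x ∂μ := rfl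
    have hFabs : ∫ x, |F x| ∂μ ≤ (j:ℝ)^η * I0 := by
      have heq : ∫ x, |F x| ∂μ = ∫ x in E K, |b j x| ∂μ := by
        rw [← integral_indicator hEKmeas]
        congr 1
        funext x
        rw [hFdef]
        by_cases hxE : x ∈ E K <;> simp [hxE]
      rw [heq]
      calc ∫ x in E K, |b j x| ∂μ ≤ ∫ x in E K, cc j x * (j:ℝ)^η ∂μ := by
            refine integral_mono_ae ((hbint j).abs.integrableOn)
              (((hccint j).mul_const _).integrableOn) ?_
            exact ae_restrict_of_ae (hbcc j)
        _ = (∫ x in E K, cc j x ∂μ) * (j:ℝ)^η := integral_mul_const _ _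
        _ ≤ I0 * (j:ℝ)^η :=
            mul_le_mul_of_nonneg_right hccint' (Real.rpow_nonneg hj0.le η)
        _ = (j:ℝ)^η * I0 := mul_comm _ _
    have habs : |∫ x, F x * CE x ∂μ|
        ≤ Real.exp (-ρ * ((j:ℝ) - (K:ℝ))) * ((j:ℝ)^η * I0) := by
      calc |∫ x, F x * CE x ∂μ| ≤ ∫ x, |F x| * |CE x| ∂μ := by
            simpa [Real.norm_eq_abs, abs_mul] using
              norm_integral_le_integral_norm (μ := μ) (fun x => F x * CE x)
        _ ≤ ∫ x, |F x| * Real.exp (-ρ * ((j:ℝ) - (K:ℝ))) ∂μ := by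
            refine integral_mono_ae ?_ ((hFint.abs.mul_const _)) ?_
            · have : (fun x => |F x| * |CE x|) = fun x => |F x * CE x| := by
                funext x; rw [abs_mul]
              rw [this]; exact hFCEint.abs
            · filter_upwards [hCEbdd] with x hx
              exact mul_le_mul_of_nonneg_left hx (abs_nonneg _)
        _ = Real.exp (-ρ * ((j:ℝ) - (K:ℝ))) * ∫ x, |F x| ∂μ := by
            rw [integral_mul_const]; ring
        _ ≤ Real.exp (-ρ * ((j:ℝ) - (K:ℝ))) * ((j:ℝ)^η * I0) :=
            mul_le_mul_of_nonneg_left hFabs hexpnn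
    have hexp : Real.exp (-ρ * ((j:ℝ) - (K:ℝ))) ≤ 1 / (j:ℝ) ^ (c*ρ) := by
      have h1 : c * Real.log j ≤ (j:ℝ) - (K:ℝ) := by linarith
      calc Real.exp (-ρ * ((j:ℝ) - (K:ℝ))) ≤ Real.exp (-(Real.log j * (c*ρ))) := by
            apply Real.exp_le_exp.mpr
            nlinarith [mul_le_mul_of_nonneg_left h1 hρ.le]
        _ = 1 / (j:ℝ) ^ (c*ρ) := by
            rw [Real.rpow_def_of_pos hj0, one_div, ← Real.exp_neg]
    have hIeq : ∫ x in E K, G j x ∂μ = (∫ x, F x * w j x ∂μ) / (j:ℝ)^α := by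
      calc ∫ x in E K, G j x ∂μ = ∫ x in E K, (b j x * w j x) / (j:ℝ)^α ∂μ := rfl
        _ = (∫ x in E K, b j x * w j x ∂μ) / (j:ℝ)^α := integral_div _ _
        _ = (∫ x, F x * w j x ∂μ) / (j:ℝ)^α := by
            congr 1
            rw [← integral_indicator hEKmeas]
            congr 1
            funext x
            rw [hFdef]
            by_cases hxE : x ∈ E K <;> simp [hxE]
    have hbound : |∫ x, F x * w j x ∂μ| ≤ 1 / (j:ℝ)^(c*ρ) * ((j:ℝ)^η * I0) := by
      rw [hCEstep]
      refine le_trans habs ?_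
      exact mul_le_mul_of_nonneg_right hexp (mul_nonneg (Real.rpow_nonneg hj0.le η) hI0)
    have hrw : (1/(j:ℝ)^(c*ρ) * ((j:ℝ)^η * I0)) / (j:ℝ)^α = 1/(j:ℝ)^(c*ρ + α - η) * I0 := by
      rw [one_div, one_div, ← Real.rpow_neg hj0.le, ← Real.rpow_neg hj0.le, div_eq_mul_inv,
        ← Real.rpow_neg hj0.le]
      rw [show (j:ℝ)^(-(c*ρ)) * ((j:ℝ)^η * I0) * (j:ℝ)^(-α)
          = ((j:ℝ)^(-(c*ρ)) * (j:ℝ)^η * (j:ℝ)^(-α)) * I0 by ring]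
      rw [← Real.rpow_add hj0, ← Real.rpow_add hj0,
        show -(c*ρ) + η + -α = -(c*ρ + α - η) by ring]
    rw [hIeq, abs_div, abs_of_pos hjα, ← hrw]
    gcongr
  -- second (counting) bound
  have hDmeas : ∀ j, MeasurableSet (E j \ E (k j)) := fun j => (hEmeas j).diff (hEmeas (k j))
  have hαη : (0:ℝ) < α - η := lt_trans hβ0 hβ
  have hm0 : (0:ℝ) < (m:ℝ) := hjpos m le_rfl
  have hI2 : ∑ j ∈ Finset.Ico m N, |∫ x in E j \ E (k j), G j x ∂μ| ≤ D2 * I0 := by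
    have hindint : ∀ j ∈ Finset.Ico m N,
        Integrable (fun x => Set.indicator (E j \ E (k j)) (fun y => |G j y|) x) μ := by
      intro j hj
      exact ((hGint j (Finset.mem_Ico.mp hj).1).abs.indicator (hDmeas j))
    have hterm : ∀ j ∈ Finset.Ico m N, |∫ x in E j \ E (k j), G j x ∂μ|
        ≤ ∫ x, Set.indicator (E j \ E (k j)) (fun y => |G j y|) x ∂μ := by
      intro j hj
      calc |∫ x in E j \ E (k j), G j x ∂μ| ≤ ∫ x in E j \ E (k j), |G j x| ∂μ :=
            abs_integral_le_integral_abs' (μ.restrict (E j \ E (k j))) (G j)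
        _ = ∫ x, Set.indicator (E j \ E (k j)) (fun y => |G j y|) x ∂μ :=
            (integral_indicator (hDmeas j)).symm
    have hsum1 : ∑ j ∈ Finset.Ico m N, |∫ x in E j \ E (k j), G j x ∂μ|
        ≤ ∫ x, (∑ j ∈ Finset.Ico m N,
            Set.indicator (E j \ E (k j)) (fun y => |G j y|) x) ∂μ := by
      rw [integral_finset_sum _ hindint]
      exact Finset.sum_le_sum hterm
    refine le_trans hsum1 ?_
    have hΦint : Integrable (fun x => ∑ j ∈ Finset.Ico m N,
        Set.indicator (E j \ E (k j)) (fun y => |G j y|) x) μ :=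
      integrable_finset_sum _ hindint
    have hD2Cint : Integrable (Set.indicator A (fun y => D2 * C y)) μ :=
      (hCint.const_mul D2).indicator hAmeas
    have hptwise : ∀ᵐ x ∂μ, (∑ j ∈ Finset.Ico m N,
        Set.indicator (E j \ E (k j)) (fun y => |G j y|) x)
        ≤ Set.indicator A (fun y => D2 * C y) x := by
      filter_upwards [ae_all_iff.mpr hbcc, ae_all_iff.mpr hwbdd] with x hbx hwx
      by_cases hxA : x ∈ A
      · rw [Set.indicator_of_mem hxA]
        obtain ⟨hn1, hn2, hn3⟩ := hτspec x hxA
        have hn0 : (0:ℝ) < (τ x : ℝ) := hjpos (τ x) hn1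
        set Fs := (Finset.Ico m N).filter (fun j => x ∈ E j \ E (k j)) with hFsdef
        have hΦx : ∑ j ∈ Finset.Ico m N,
            Set.indicator (E j \ E (k j)) (fun y => |G j y|) x = ∑ j ∈ Fs, |G j x| := by
          rw [hFsdef, Finset.sum_filter]
          apply Finset.sum_congr rfl
          intro j hj
          by_cases hxj : x ∈ E j \ E (k j)
          · rw [Set.indicator_of_mem hxj, if_pos hxj]
          · rw [Set.indicator_of_notMem hxj, if_neg hxj]
        have hnleFs : ∀ j ∈ Fs, τ x ≤ j ∧ m ≤ j ∧ j < N := by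
          intro j hj
          rw [hFsdef, Finset.mem_filter, Finset.mem_Ico] at hj
          exact ⟨(hEiff x hxA j).mp hj.2.1, hj.1.1, hj.1.2⟩
        have hsubT : ↑Fs ⊆ {j : ℕ | τ x ≤ j ∧ (j:ℝ) - c * Real.log j ≤ ((τ x):ℝ)} := by
          intro j hj
          rw [Finset.mem_coe] at hj
          have h1 := hnleFs j hj
          rw [hFsdef, Finset.mem_filter, Finset.mem_Ico] at hj
          have h2 : ¬ (τ x ≤ k j) := fun h => hj.2.2 ((hEiff x hxA (k j)).mpr h)
          have h3 : k j < τ x := lt_of_not_ge h2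
          have h4 : (j:ℝ) - c * Real.log j < (τ x : ℝ) :=
            (Nat.floor_lt (le_trans zero_le_one (hfloor j hj.1.1))).mp h3
          exact ⟨h1.1, h4.le⟩
        have h1n : 1 ≤ τ x := le_trans (by omega) hn1
        have hcardFs : (Fs.card : ℝ) ≤ d * ((τ x):ℝ)^β := by
          have hfin := auxT_finite c hc (τ x)
          have hle := Set.ncard_le_ncard hsubT hfin
          rw [Set.ncard_coe_finset] at hle
          calc (Fs.card : ℝ)
              ≤ (({j : ℕ | τ x ≤ j ∧ (j:ℝ) - c * Real.log j ≤ ((τ x):ℝ)}.ncard : ℕ) : ℝ) := by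
                exact_mod_cast hle
            _ ≤ d * ((τ x):ℝ)^β := hcard (τ x) h1n
        have hterm2 : ∀ j ∈ Fs, |G j x| ≤ C x * ((τ x):ℝ)^(η-α) := by
          intro j hj
          obtain ⟨hτj, hjm', hjN'⟩ := hnleFs j hj
          have hj0 : (0:ℝ) < (j:ℝ) := hjpos j hjm'
          have hjα : (0:ℝ) < (j:ℝ)^α := Real.rpow_pos_of_pos hj0 α
          have hτjR : ((τ x):ℝ) ≤ (j:ℝ) := by exact_mod_cast hτj
          calc |G j x| = |b j x * w j x| / (j:ℝ)^α := by
                have hGx : G j x = b j x * w j x / (j:ℝ)^α := rfl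
                rw [hGx, abs_div, abs_of_pos hjα]
            _ ≤ (cc j x * (j:ℝ)^η) / (j:ℝ)^α := by
                gcongr
                rw [abs_mul]
                nlinarith [abs_nonneg (b j x), abs_nonneg (w j x), hbx j, hwx j]
            _ = cc j x * (j:ℝ)^(η-α) := by
                rw [Real.rpow_sub hj0]; ring
            _ ≤ C x * ((τ x):ℝ)^(η-α) := by
                apply mul_le_mul (hcleC j (Finset.mem_Icc.mpr ⟨hjm', hjN'.le⟩) x)
                  (Real.rpow_le_rpow_of_nonpos hn0 hτjR (by linarith))
                  (Real.rpow_nonneg hj0.le _) (hCnn x)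
        calc ∑ j ∈ Finset.Ico m N, Set.indicator (E j \ E (k j)) (fun y => |G j y|) x
            = ∑ j ∈ Fs, |G j x| := hΦx
          _ ≤ Fs.card • (C x * ((τ x):ℝ)^(η-α)) := Finset.sum_le_card_nsmul _ _ _ hterm2
          _ = (Fs.card : ℝ) * (C x * ((τ x):ℝ)^(η-α)) := nsmul_eq_mul _ _
          _ ≤ (d * ((τ x):ℝ)^β) * (C x * ((τ x):ℝ)^(η-α)) :=
              mul_le_mul_of_nonneg_right hcardFs
                (mul_nonneg (hCnn x) (Real.rpow_nonneg hn0.le _))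
          _ = d * ((τ x):ℝ)^(β+(η-α)) * C x := by
              rw [Real.rpow_add hn0]; ring
          _ ≤ d * (m:ℝ)^(β+(η-α)) * C x := by
              apply mul_le_mul_of_nonneg_right ?_ (hCnn x)
              apply mul_le_mul_of_nonneg_left ?_ hd.le
              exact Real.rpow_le_rpow_of_nonpos hm0 (by exact_mod_cast hn1) (by linarith)
          _ = D2 * C x := by
              rw [hD2def, show β + (η-α) = β - (α-η) by ring, Real.rpow_sub hm0]
              ring
      · rw [Set.indicator_of_notMem hxA]
        have hz : ∑ j ∈ Finset.Ico m N,
            Set.indicator (E j \ E (k j)) (fun y => |G j y|) x = 0 := by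
          apply Finset.sum_eq_zero
          intro j hj
          exact Set.indicator_of_notMem (fun hmem => hxA (hEA j hmem.1)) _
        rw [hz]
    calc ∫ x, (∑ j ∈ Finset.Ico m N,
          Set.indicator (E j \ E (k j)) (fun y => |G j y|) x) ∂μ
        ≤ ∫ x, Set.indicator A (fun y => D2 * C y) x ∂μ :=
          integral_mono_ae hΦint hD2Cint hptwise
      _ = ∫ x in A, D2 * C x ∂μ := integral_indicator hAmeas
      _ = D2 * I0 := by rw [hI0def, integral_const_mul]
  -- splitting the integral over E j
  have hsplit : ∀ j ∈ Finset.Ico m N, ∫ x in E j, G j x ∂μ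
      = ∫ x in E (k j), G j x ∂μ + ∫ x in E j \ E (k j), G j x ∂μ := by
    intro j hj
    rw [Finset.mem_Ico] at hj
    have hsub : E (k j) ⊆ E j := hEmono _ _ (hkj j hj.1).le
    rw [← setIntegral_union Set.disjoint_sdiff_right ((hEmeas j).diff (hEmeas (k j)))
      ((hGint j hj.1).integrableOn) ((hGint j hj.1).integrableOn),
      Set.union_diff_cancel hsub]
  have hSNint : Integrable (S N) μ :=
    integrable_finset_sum _ (fun j hj => hGint j (Finset.mem_Ico.mp hj).1)
  have hTint : Integrable (fun x => ∑ j ∈ Finset.Ico m N, Set.indicator (E j) (G j) x) μ :=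
    integrable_finset_sum _
      (fun j hj => ((hGint j (Finset.mem_Ico.mp hj).1).indicator (hEmeas j)))
  have hTeq : ∫ x in A, (∑ j ∈ Finset.Ico m N, Set.indicator (E j) (G j) x) ∂μ
      = ∑ j ∈ Finset.Ico m N, ∫ x in E j, G j x ∂μ := by
    rw [integral_finset_sum _ (fun j hj =>
      ((hGint j (Finset.mem_Ico.mp hj).1).indicator (hEmeas j)).integrableOn)]
    apply Finset.sum_congr rfl
    intro j hj
    rw [setIntegral_indicator (hEmeas j), Set.inter_eq_self_of_subset_right (hEA j)]
  have hD1I0 : ∑ j ∈ Finset.Ico m N, |∫ x in E (k j), G j x ∂μ| ≤ D1 * I0 := by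
    calc ∑ j ∈ Finset.Ico m N, |∫ x in E (k j), G j x ∂μ|
        ≤ ∑ j ∈ Finset.Ico m N, 1/(j:ℝ)^(c*ρ+α-η) * I0 := Finset.sum_le_sum hI1
      _ = D1 * I0 := by rw [hD1def, Finset.sum_mul]
  have main : lam * (μ A).toReal ≤ ∫ x in A, (|S N x| + (D1 + D2) * C x) ∂μ := by
    have hμA : μ A < ⊤ := measure_lt_top μ A
    have step1 : lam * (μ A).toReal
        ≤ ∫ x in A, (S N x - ∑ j ∈ Finset.Ico m N, Set.indicator (E j) (G j) x) ∂μ := by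
      have h := setIntegral_mono_on (integrableOn_const hμA.ne)
        ((hSNint.sub hTint).integrableOn) hAmeas hkey
      calc lam * (μ A).toReal = ∫ _x in A, lam ∂μ := by
            rw [setIntegral_const, smul_eq_mul, mul_comm]; rfl
        _ ≤ _ := h
    have step2 : ∫ x in A, (S N x - ∑ j ∈ Finset.Ico m N, Set.indicator (E j) (G j) x) ∂μ
        = ∫ x in A, S N x ∂μ - ∑ j ∈ Finset.Ico m N, ∫ x in E j, G j x ∂μ := by
      rw [integral_sub hSNint.integrableOn hTint.integrableOn, hTeq]
    have step3 : ∑ j ∈ Finset.Ico m N, ∫ x in E j, G j x ∂μ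
        = (∑ j ∈ Finset.Ico m N, ∫ x in E (k j), G j x ∂μ)
          + ∑ j ∈ Finset.Ico m N, ∫ x in E j \ E (k j), G j x ∂μ := by
      rw [← Finset.sum_add_distrib]
      exact Finset.sum_congr rfl hsplit
    have step4 : -(∑ j ∈ Finset.Ico m N, ∫ x in E (k j), G j x ∂μ) ≤ D1 * I0 :=
      le_trans (neg_le_abs _) (le_trans (Finset.abs_sum_le_sum_abs _ _) hD1I0)
    have step5 : -(∑ j ∈ Finset.Ico m N, ∫ x in E j \ E (k j), G j x ∂μ) ≤ D2 * I0 :=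
      le_trans (neg_le_abs _) (le_trans (Finset.abs_sum_le_sum_abs _ _) hI2)
    have step6 : ∫ x in A, S N x ∂μ ≤ ∫ x in A, |S N x| ∂μ :=
      setIntegral_mono_on hSNint.integrableOn hSNint.abs.integrableOn hAmeas
        (fun x _ => le_abs_self _)
    have step7 : ∫ x in A, (|S N x| + (D1 + D2) * C x) ∂μ
        = ∫ x in A, |S N x| ∂μ + (D1 + D2) * I0 := by
      rw [integral_add hSNint.abs.integrableOn ((hCint.const_mul (D1+D2)).integrableOn),
        integral_const_mul, hI0def]
    rw [step7]
    have h12 := step1.trans_eq step2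
    have hdist : (D1 + D2) * I0 = D1 * I0 + D2 * I0 := by ring
    linarith [h12, step3, step4, step5, step6, hdist]
  exact main
end
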